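/- Let d ∈ ℕ. There exists a constant c > 0, depending only on d, such that for every θ ∈ [0,1], every j ∈ ℤ, and all Lebesgue-measurable sets E, A, B ⊆ ℝ^d of finite measure, (∫_E I_j^θ(χ_A, χ_B)(x)^{1/2} dx)² ≤ c |A| |B| min{2^{dj}, |E|}. -/

import Mathlib

open MeasureTheory ENNReal

/-- The bilinear operator `I_j^θ(f,g)(x) = ∫_{|y| ≤ 2^j} f(x + (θ−1)y) g(x + θy) dy`. -/
noncomputable def Ij (d : ℕ) (j : ℤ) (θ : ℝ)
    (f g : EuclideanSpace ℝ (Fin d) → ℝ≥0∞) (x : EuclideanSpace ℝ (Fin d)) : ℝ≥0∞ :=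
  ∫⁻ y in {y : EuclideanSpace ℝ (Fin d) | ‖y‖ ≤ (2 : ℝ) ^ j},
    f (x + (θ - 1) • y) * g (x + θ • y)

section Aux

variable {d : ℕ}

local notation "V" => EuclideanSpace ℝ (Fin d)

lemma meas_pair (c : ℝ) {A : Set V} (hA : MeasurableSet A) :
    Measurable fun p : V × V => A.indicator (1 : V → ℝ≥0∞) (p.1 + c • p.2) :=
  (measurable_one.indicator hA).comp
    ((continuous_fst.add (continuous_snd.const_smul c)).measurable)

/-- The key exact identity: dropping the ball restriction, the double integral splits. -/
lemma key_eq (θ : ℝ) {A B : Set V} (hA : MeasurableSet A) (hB : MeasurableSet B) :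
    ∫⁻ x, ∫⁻ y, A.indicator 1 (x + (θ - 1) • y) * B.indicator 1 (x + θ • y) =
      volume A * volume B := by
  have hmA := meas_pair (d := d) (θ - 1) hA
  have hmB := meas_pair (d := d) θ hB
  rw [lintegral_lintegral_swap (hmA.mul hmB).aemeasurable]
  have h1 : ∀ y : V,
      (∫⁻ x, A.indicator 1 (x + (θ - 1) • y) * B.indicator 1 (x + θ • y)) =
      ∫⁻ x, A.indicator 1 (x - y) * B.indicator 1 x := by
    intro y
    have h := lintegral_add_right_eq_self
      (μ := volume) (fun x => A.indicator (1 : V → ℝ≥0∞) (x - y) * B.indicator 1 x) (θ • y)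
    rw [← h]
    congr 1 with x
    congr 2
    rw [sub_smul, one_smul]
    abel
  simp_rw [h1]
  have hm2 : Measurable fun p : V × V => A.indicator (1 : V → ℝ≥0∞) (p.2 - p.1) *
      B.indicator 1 p.2 := by
    exact ((measurable_one.indicator hA).comp
      ((continuous_snd.sub continuous_fst).measurable)).mul
      ((measurable_one.indicator hB).comp continuous_snd.measurable)
  rw [lintegral_lintegral_swap hm2.aemeasurable]
  have h2 : ∀ x : V, (∫⁻ y, A.indicator 1 (x - y) * B.indicator (1 : V → ℝ≥0∞) x) =
      B.indicator (1 : V → ℝ≥0∞) x * volume A := by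
    intro x
    have hmeas : Measurable fun y : V => A.indicator (1 : V → ℝ≥0∞) (x - y) :=
      (measurable_one.indicator hA).comp (measurable_const.sub measurable_id)
    calc (∫⁻ y, A.indicator 1 (x - y) * B.indicator (1 : V → ℝ≥0∞) x)
        = (∫⁻ y, A.indicator 1 (x - y)) * B.indicator (1 : V → ℝ≥0∞) x :=
          lintegral_mul_const _ hmeas
      _ = B.indicator (1 : V → ℝ≥0∞) x * volume A := by
          rw [mul_comm]; congr 1
          rw [(Measure.measurePreserving_sub_left (volume : Measure V) x).lintegral_comp
            (measurable_one.indicator hA)]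
          exact lintegral_indicator_one hA
  simp_rw [h2]
  rw [lintegral_mul_const _ (measurable_one.indicator hB), lintegral_indicator_one hB, mul_comm]

lemma Ij_meas (j : ℤ) (θ : ℝ) {A B : Set V} (hA : MeasurableSet A) (hB : MeasurableSet B) :
    Measurable (Ij d j θ (A.indicator 1) (B.indicator 1)) := by
  have hT : MeasurableSet {y : V | ‖y‖ ≤ (2 : ℝ) ^ j} :=
    (isClosed_le continuous_norm continuous_const).measurableSet
  have hrw : ∀ x : V, Ij d j θ (A.indicator 1) (B.indicator 1) x =
      ∫⁻ y, ({y : V | ‖y‖ ≤ (2 : ℝ) ^ j}.indicator (1 : V → ℝ≥0∞) y) *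
        (A.indicator 1 (x + (θ - 1) • y) * B.indicator 1 (x + θ • y)) := by
    intro x
    rw [Ij, ← lintegral_indicator hT]
    congr 1 with y
    by_cases hy : y ∈ {y : V | ‖y‖ ≤ (2 : ℝ) ^ j}
    · rw [Set.indicator_of_mem hy, Set.indicator_of_mem hy, Pi.one_apply, one_mul]
    · rw [Set.indicator_of_notMem hy, Set.indicator_of_notMem hy, zero_mul]
  rw [show Ij d j θ (A.indicator 1) (B.indicator 1) = fun x =>
      ∫⁻ y, ({y : V | ‖y‖ ≤ (2 : ℝ) ^ j}.indicator (1 : V → ℝ≥0∞) y) *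
        (A.indicator 1 (x + (θ - 1) • y) * B.indicator 1 (x + θ • y)) from funext hrw]
  exact Measurable.lintegral_prod_right
    (((measurable_one.indicator hT).comp measurable_snd).mul
      ((meas_pair (θ - 1) hA).mul (meas_pair θ hB)))

lemma loc_bound {θ : ℝ} (hθ : θ ∈ Set.Icc (0:ℝ) 1) (j : ℤ)
    {A B Q R : Set V} (hA : MeasurableSet A) (hB : MeasurableSet B)
    (hQ : MeasurableSet Q) (hR : MeasurableSet R)
    (hQR : ∀ x ∈ Q, ∀ y : V, ‖y‖ ≤ (2:ℝ)^j → ∀ t : ℝ, |t| ≤ 1 → x + t • y ∈ R) :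
    (∫⁻ x in Q, Ij d j θ (A.indicator 1) (B.indicator 1) x) ≤
      volume (A ∩ R) * volume (B ∩ R) := by
  obtain ⟨hθ0, hθone⟩ := hθ
  have hθ1 : |θ| ≤ 1 := abs_le.mpr ⟨by linarith, by linarith⟩
  have hθ2 : |θ - 1| ≤ 1 := abs_le.mpr ⟨by linarith, by linarith⟩
  have hT : MeasurableSet {y : V | ‖y‖ ≤ (2 : ℝ) ^ j} :=
    (isClosed_le continuous_norm continuous_const).measurableSet
  have step1 : ∀ x ∈ Q, Ij d j θ (A.indicator 1) (B.indicator 1) x ≤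
      ∫⁻ y, (A ∩ R).indicator 1 (x + (θ-1)•y) * (B ∩ R).indicator 1 (x + θ•y) := by
    intro x hx
    rw [Ij]
    refine le_trans (setLIntegral_mono' hT ?_) (setLIntegral_le_lintegral _ _)
    intro y hy
    by_cases h1 : x + (θ-1)•y ∈ A
    · by_cases h2 : x + θ•y ∈ B
      · have r1 : x + (θ-1)•y ∈ R := hQR x hx y hy _ hθ2
        have r2 : x + θ•y ∈ R := hQR x hx y hy _ hθ1
        rw [Set.indicator_of_mem h1, Set.indicator_of_mem h2,
          Set.indicator_of_mem (Set.mem_inter h1 r1), Set.indicator_of_mem (Set.mem_inter h2 r2)]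
      · simp [Set.indicator_of_notMem h2]
    · simp [Set.indicator_of_notMem h1]
  calc (∫⁻ x in Q, Ij d j θ (A.indicator 1) (B.indicator 1) x)
      ≤ ∫⁻ x in Q, ∫⁻ y, (A ∩ R).indicator 1 (x + (θ-1)•y) * (B ∩ R).indicator 1 (x + θ•y) :=
        setLIntegral_mono' hQ step1
    _ ≤ ∫⁻ x, ∫⁻ y, (A ∩ R).indicator 1 (x + (θ-1)•y) * (B ∩ R).indicator 1 (x + θ•y) :=
        setLIntegral_le_lintegral _ _
    _ = volume (A ∩ R) * volume (B ∩ R) := key_eq θ (hA.inter hR) (hB.inter hR)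

lemma half_sq (x : ℝ≥0∞) : (x ^ ((1:ℝ)/2)) ^ (2:ℝ) = x := by
  rw [← ENNReal.rpow_mul]; norm_num

lemma cs_int {α : Type*} [MeasurableSpace α] {μ : Measure α} {f : α → ℝ≥0∞}
    (hf : AEMeasurable f μ) :
    (∫⁻ x, f x ^ ((1:ℝ)/2) ∂μ) ≤ (∫⁻ x, f x ∂μ) ^ ((1:ℝ)/2) * μ Set.univ ^ ((1:ℝ)/2) := by
  have hpq : Real.HolderConjugate 2 2 := Real.HolderConjugate.two_two
  have h := ENNReal.lintegral_mul_le_Lp_mul_Lq μ hpq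
    (f := fun x => f x ^ ((1:ℝ)/2)) (g := fun _ => 1)
    (hf.pow_const _) aemeasurable_const
  simp only [Pi.mul_apply, mul_one, ENNReal.one_rpow, lintegral_one, half_sq] at h
  exact h

lemma cs_sum {ι : Type*} [Countable ι] (a b : ι → ℝ≥0∞) :
    (∑' k, a k ^ ((1:ℝ)/2) * b k ^ ((1:ℝ)/2)) ≤
      (∑' k, a k) ^ ((1:ℝ)/2) * (∑' k, b k) ^ ((1:ℝ)/2) := by
  letI : MeasurableSpace ι := ⊤
  haveI : MeasurableSingletonClass ι := ⟨fun _ => MeasurableSpace.measurableSet_top⟩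
  have hpq : Real.HolderConjugate 2 2 := Real.HolderConjugate.two_two
  have hma : Measurable fun k => a k ^ ((1:ℝ)/2) := fun s _ => MeasurableSpace.measurableSet_top
  have hmb : Measurable fun k => b k ^ ((1:ℝ)/2) := fun s _ => MeasurableSpace.measurableSet_top
  have h := ENNReal.lintegral_mul_le_Lp_mul_Lq (Measure.count : Measure ι) hpq
    hma.aemeasurable hmb.aemeasurable
  simp only [Pi.mul_apply, lintegral_count, half_sq] at h
  exact h

set_option maxHeartbeats 1000000 in
lemma abs_coord_le (y : V) (i : Fin d) : |y i| ≤ ‖y‖ := by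
  rw [EuclideanSpace.norm_eq]
  have h : y i ^ 2 ≤ ∑ i', ‖y i'‖ ^ 2 := by
    have h2 := Finset.single_le_sum (f := fun i' => ‖y i'‖ ^ 2)
      (fun i' _ => sq_nonneg _) (Finset.mem_univ i)
    simpa [Real.norm_eq_abs, sq_abs] using h2
  calc |y i| = Real.sqrt (y i ^ 2) := (Real.sqrt_sq_eq_abs _).symm
    _ ≤ _ := Real.sqrt_le_sqrt h

def cube (d : ℕ) (j : ℤ) (k : Fin d → ℤ) : Set (EuclideanSpace ℝ (Fin d)) :=
  {x | ∀ i, (2:ℝ)^j * (k i : ℝ) ≤ x i ∧ x i < (2:ℝ)^j * ((k i : ℝ) + 1)}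

def cubeS (d : ℕ) (j : ℤ) (k : Fin d → ℤ) : Set (EuclideanSpace ℝ (Fin d)) :=
  {x | ∀ i, (2:ℝ)^j * ((k i : ℝ) - 1) ≤ x i ∧ x i ≤ (2:ℝ)^j * ((k i : ℝ) + 2)}

lemma cube_eq (j : ℤ) (k : Fin d → ℤ) :
    cube d j k = ((MeasurableEquiv.toLp 2 (Fin d → ℝ)).symm) ⁻¹'
      (Set.univ.pi fun i => Set.Ico ((2:ℝ)^j * (k i : ℝ)) ((2:ℝ)^j * ((k i : ℝ) + 1))) := by
  ext x
  simp only [cube, Set.mem_preimage, Set.mem_pi, Set.mem_univ, forall_true_left, Set.mem_Ico,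
    Set.mem_setOf_eq, MeasurableEquiv.toLp_symm_apply, forall_and,
    true_implies]

lemma cubeS_eq (j : ℤ) (k : Fin d → ℤ) :
    cubeS d j k = ((MeasurableEquiv.toLp 2 (Fin d → ℝ)).symm) ⁻¹'
      (Set.univ.pi fun i => Set.Icc ((2:ℝ)^j * ((k i : ℝ) - 1)) ((2:ℝ)^j * ((k i : ℝ) + 2))) := by
  ext x
  simp only [cubeS, Set.mem_preimage, Set.mem_pi, Set.mem_univ, forall_true_left, Set.mem_Icc,
    Set.mem_setOf_eq, MeasurableEquiv.toLp_symm_apply, forall_and,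
    true_implies]

lemma cube_meas (j : ℤ) (k : Fin d → ℤ) : MeasurableSet (cube d j k) := by
  rw [cube_eq]
  exact ((MeasurableEquiv.toLp 2 (Fin d → ℝ)).symm).measurable
    (MeasurableSet.univ_pi fun i => measurableSet_Ico)

lemma cubeS_meas (j : ℤ) (k : Fin d → ℤ) : MeasurableSet (cubeS d j k) := by
  rw [cubeS_eq]
  exact ((MeasurableEquiv.toLp 2 (Fin d → ℝ)).symm).measurable
    (MeasurableSet.univ_pi fun i => measurableSet_Icc)

lemma cube_vol (j : ℤ) (k : Fin d → ℤ) :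
    volume (cube d j k) = ENNReal.ofReal ((2:ℝ)^j) ^ d := by
  rw [cube_eq, (EuclideanSpace.volume_preserving_symm_measurableEquiv_toLp (Fin d)).measure_preimage
    ((MeasurableSet.univ_pi fun i => measurableSet_Ico).nullMeasurableSet)]
  rw [volume_pi_pi]
  have h : ∀ i : Fin d, volume (Set.Ico ((2:ℝ)^j * (k i : ℝ)) ((2:ℝ)^j * ((k i : ℝ) + 1))) =
      ENNReal.ofReal ((2:ℝ)^j) := by
    intro i
    rw [Real.volume_Ico]
    congr 1
    ring
  simp [h]

lemma cube_cover (j : ℤ) : (Set.univ : Set V) ⊆ ⋃ k : Fin d → ℤ, cube d j k := by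
  intro x _
  have hs : (0:ℝ) < 2^j := by positivity
  refine Set.mem_iUnion.2 ⟨fun i => ⌊x i / (2:ℝ)^j⌋, fun i => ⟨?_, ?_⟩⟩
  · rw [mul_comm]
    exact (le_div_iff₀ hs).mp (Int.floor_le (x i / (2:ℝ)^j))
  · rw [mul_comm]
    exact (div_lt_iff₀ hs).mp (Int.lt_floor_add_one (x i / (2:ℝ)^j))

lemma cube_stab (j : ℤ) (k : Fin d → ℤ) :
    ∀ x ∈ cube d j k, ∀ y : V, ‖y‖ ≤ (2:ℝ)^j → ∀ t : ℝ, |t| ≤ 1 →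
      x + t • y ∈ cubeS d j k := by
  intro x hx y hy t ht i
  have hyi : |y i| ≤ (2:ℝ)^j := (abs_coord_le y i).trans hy
  have h1 := (hx i).1
  have h2 := (hx i).2
  have happ : (x + t • y) i = x i + t * y i := rfl
  have habs : |t * y i| ≤ (2:ℝ)^j := by
    rw [abs_mul]
    calc |t| * |y i| ≤ 1 * (2:ℝ)^j :=
          mul_le_mul ht hyi (abs_nonneg _) zero_le_one
      _ = (2:ℝ)^j := one_mul _
  obtain ⟨hl, hr⟩ := abs_le.mp habs
  rw [happ]
  constructor
  · have e1 : (2:ℝ)^j * ((k i : ℝ) - 1) = (2:ℝ)^j * (k i : ℝ) - (2:ℝ)^j := by ring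
    linarith
  · have e2 : (2:ℝ)^j * ((k i : ℝ) + 2) = (2:ℝ)^j * ((k i : ℝ) + 1) + (2:ℝ)^j := by ring
    linarith

lemma overlap (j : ℤ) (x : V) :
    (∑' k : Fin d → ℤ, (cubeS d j k).indicator (1 : V → ℝ≥0∞) x) ≤ (5:ℝ≥0∞)^d := by
  have hs : (0:ℝ) < 2^j := by positivity
  set F : Finset (Fin d → ℤ) :=
    Finset.Icc (fun i => ⌊x i / (2:ℝ)^j⌋ - 2) (fun i => ⌊x i / (2:ℝ)^j⌋ + 2) with hF
  have hmem : ∀ k : Fin d → ℤ, x ∈ cubeS d j k → k ∈ F := by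
    intro k hk
    rw [hF, Finset.mem_Icc]
    constructor
    · intro i
      show ⌊x i / (2:ℝ)^j⌋ - 2 ≤ k i
      have h2 := (hk i).2
      have hdiv : x i / 2^j ≤ (k i : ℝ) + 2 := by
        rw [div_le_iff₀ hs]
        linarith [h2]
      have hfl : ⌊x i / (2:ℝ)^j⌋ ≤ k i + 2 := by
        have h3 := Int.floor_le_floor (R := ℝ) hdiv
        rw [show ((k i : ℝ) + 2) = ((k i + 2 : ℤ) : ℝ) by push_cast; ring] at h3
        simpa using h3
      omega
    · intro i
      show k i ≤ ⌊x i / (2:ℝ)^j⌋ + 2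
      have h1 := (hk i).1
      have hdiv : (k i : ℝ) - 1 ≤ x i / 2^j := by
        rw [le_div_iff₀ hs]
        linarith [h1]
      have hfl : k i - 1 ≤ ⌊x i / (2:ℝ)^j⌋ := by
        refine Int.le_floor.mpr ?_
        rw [show ((k i - 1 : ℤ) : ℝ) = (k i : ℝ) - 1 by push_cast; ring]
        exact hdiv
      omega
  have hcard : F.card = 5 ^ d := by
    rw [hF, Pi.card_Icc]
    have h5 : ∀ i : Fin d, (Finset.Icc (⌊x i / (2:ℝ)^j⌋ - 2) (⌊x i / (2:ℝ)^j⌋ + 2)).card = 5 := by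
      intro i
      rw [Int.card_Icc]
      omega
    simp [h5]
  calc (∑' k : Fin d → ℤ, (cubeS d j k).indicator (1 : V → ℝ≥0∞) x)
      ≤ ∑' k : Fin d → ℤ, (F : Set (Fin d → ℤ)).indicator (fun _ => (1:ℝ≥0∞)) k := by
        refine ENNReal.tsum_le_tsum fun k => ?_
        by_cases hk : x ∈ cubeS d j k
        · rw [Set.indicator_of_mem hk, Set.indicator_of_mem
            (by exact_mod_cast hmem k hk : k ∈ (F : Set (Fin d → ℤ)))]
          exact le_refl 1
        · rw [Set.indicator_of_notMem hk]
          exact zero_le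
    _ = ∑ k ∈ F, (F : Set (Fin d → ℤ)).indicator (fun _ => (1:ℝ≥0∞)) k :=
        tsum_eq_sum fun k hk => Set.indicator_of_notMem (by simpa using hk) _
    _ ≤ ∑ k ∈ F, 1 := Finset.sum_le_sum fun k _ => by
        by_cases hk : k ∈ (F : Set (Fin d → ℤ))
        · rw [Set.indicator_of_mem hk]
        · rw [Set.indicator_of_notMem hk]; exact zero_le
    _ = (F.card : ℝ≥0∞) := by simp
    _ = (5:ℝ≥0∞)^d := by rw [hcard]; push_cast; ring

lemma sum_inter_le (j : ℤ) {A : Set V} (hA : MeasurableSet A) :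
    (∑' k : Fin d → ℤ, volume (A ∩ cubeS d j k)) ≤ (5:ℝ≥0∞)^d * volume A := by
  have h1 : ∀ k : Fin d → ℤ, volume (A ∩ cubeS d j k) =
      ∫⁻ x in A, (cubeS d j k).indicator (1 : V → ℝ≥0∞) x := by
    intro k
    rw [lintegral_indicator_one (cubeS_meas j k), Measure.restrict_apply (cubeS_meas j k),
      Set.inter_comm]
  simp_rw [h1]
  rw [← lintegral_tsum fun k =>
    ((measurable_one.indicator (cubeS_meas j k)).aemeasurable)]
  calc (∫⁻ x in A, ∑' k : Fin d → ℤ, (cubeS d j k).indicator (1 : V → ℝ≥0∞) x)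
      ≤ ∫⁻ _ in A, (5:ℝ≥0∞)^d := lintegral_mono fun x => overlap j x
    _ = (5:ℝ≥0∞)^d * volume A := by rw [setLIntegral_const]

lemma ofReal_two_zpow (j : ℤ) : ENNReal.ofReal ((2:ℝ)^j) = (2:ℝ≥0∞)^j := by
  rcases j with n | n
  · rw [Int.ofNat_eq_coe, zpow_natCast, zpow_natCast, ENNReal.ofReal_pow (by norm_num)]
    norm_num
  · rw [zpow_negSucc, zpow_negSucc, ENNReal.ofReal_inv_of_pos (by positivity),
      ENNReal.ofReal_pow (by norm_num)]
    norm_num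

end Aux

theorem stmt6 (d : ℕ) :
    ∃ c : ℝ, 0 < c ∧
      ∀ θ : ℝ, θ ∈ Set.Icc (0 : ℝ) 1 → ∀ j : ℤ,
        ∀ E A B : Set (EuclideanSpace ℝ (Fin d)),
          MeasurableSet E → MeasurableSet A → MeasurableSet B →
          volume E < ∞ → volume A < ∞ → volume B < ∞ →
          (∫⁻ x in E, (Ij d j θ (A.indicator 1) (B.indicator 1) x) ^ ((1 : ℝ) / 2)) ^ (2 : ℕ) ≤
            ENNReal.ofReal c * volume A * volume B *
              min ((2 : ℝ≥0∞) ^ ((d : ℤ) * j)) (volume E) := by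
  refine ⟨25 ^ d, by positivity, ?_⟩
  intro θ hθ j E A B hE hA hB hEv hAv hBv
  set I := Ij d j θ (A.indicator 1) (B.indicator 1) with hIdef
  have hIm : Measurable I := Ij_meas j θ hA hB
  have hsq : ∀ u v : ℝ≥0∞, u ≤ v → u ^ (2:ℕ) ≤ v ^ (2:ℕ) := fun u v h => by
    rw [pow_two, pow_two]; exact mul_le_mul' h h
  have hhalf2 : ∀ u : ℝ≥0∞, (u ^ ((1:ℝ)/2)) ^ (2:ℕ) = u := fun u => by
    rw [← ENNReal.rpow_natCast (u ^ ((1:ℝ)/2)) 2, ← ENNReal.rpow_mul]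
    norm_num
  have hofReal : ENNReal.ofReal ((25:ℝ) ^ d) = (25:ℝ≥0∞) ^ d := by
    rw [ENNReal.ofReal_pow (by norm_num)]
    norm_num
  have hone : (1:ℝ≥0∞) ≤ (25:ℝ≥0∞) ^ d := by
    calc (1:ℝ≥0∞) = 1 ^ d := (one_pow d).symm
      _ ≤ (25:ℝ≥0∞) ^ d := pow_le_pow_left' (by norm_num) d
  have hglobal : (∫⁻ x, I x) ≤ volume A * volume B := by
    have h := loc_bound (d := d) hθ j hA hB MeasurableSet.univ MeasurableSet.univ
      (fun x _ y _ t _ => Set.mem_univ _)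
    simpa [Measure.restrict_univ, Set.inter_univ] using h
  set L := ∫⁻ x in E, I x ^ ((1:ℝ)/2) with hLdef
  -- Bound 1 : L² ≤ |A| |B| |E|
  have hb1 : L ^ (2:ℕ) ≤ volume A * volume B * volume E := by
    have h1 := cs_int (μ := volume.restrict E) hIm.aemeasurable
    rw [Measure.restrict_apply_univ] at h1
    have hIE : (∫⁻ x in E, I x) ≤ volume A * volume B :=
      le_trans (setLIntegral_le_lintegral _ _) hglobal
    calc L ^ (2:ℕ) ≤ ((∫⁻ x in E, I x) ^ ((1:ℝ)/2) * volume E ^ ((1:ℝ)/2)) ^ (2:ℕ) :=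
          hsq _ _ h1
      _ = (∫⁻ x in E, I x) * volume E := by rw [mul_pow, hhalf2, hhalf2]
      _ ≤ volume A * volume B * volume E := mul_le_mul_left hIE _
  -- Bound 2 : L² ≤ 25^d |A| |B| 2^{dj}
  set P := ENNReal.ofReal ((2:ℝ) ^ j) with hPdef
  have hPd : P ^ d = (2:ℝ≥0∞) ^ ((d : ℤ) * j) := by
    rw [hPdef, ofReal_two_zpow, ← ENNReal.rpow_intCast 2 j, ← ENNReal.rpow_natCast _ d,
      ← ENNReal.rpow_mul, ← ENNReal.rpow_intCast 2 ((d : ℤ) * j)]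
    congr 1
    push_cast
    ring
  have hcube_le : ∀ k : Fin d → ℤ, (∫⁻ x in cube d j k, I x ^ ((1:ℝ)/2)) ≤
      (volume (A ∩ cubeS d j k) * volume (B ∩ cubeS d j k)) ^ ((1:ℝ)/2) *
        (P ^ d) ^ ((1:ℝ)/2) := by
    intro k
    have h2 := cs_int (μ := volume.restrict (cube d j k)) hIm.aemeasurable
    rw [Measure.restrict_apply_univ, cube_vol] at h2
    refine h2.trans ?_
    refine mul_le_mul_left (ENNReal.rpow_le_rpow ?_ (by norm_num)) _
    exact loc_bound hθ j hA hB (cube_meas j k) (cubeS_meas j k) (cube_stab j k)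
  have hsum : (∑' k : Fin d → ℤ, (volume (A ∩ cubeS d j k)) ^ ((1:ℝ)/2) *
      (volume (B ∩ cubeS d j k)) ^ ((1:ℝ)/2)) ≤
      ((5:ℝ≥0∞) ^ d * volume A) ^ ((1:ℝ)/2) * ((5:ℝ≥0∞) ^ d * volume B) ^ ((1:ℝ)/2) := by
    refine (cs_sum _ _).trans ?_
    exact mul_le_mul' (ENNReal.rpow_le_rpow (sum_inter_le j hA) (by norm_num))
      (ENNReal.rpow_le_rpow (sum_inter_le j hB) (by norm_num))
  have hcov : (⋃ k : Fin d → ℤ, cube d j k) = Set.univ :=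
    Set.univ_subset_iff.mp (cube_cover j)
  have hL2 : L ≤ (((5:ℝ≥0∞) ^ d * volume A) ^ ((1:ℝ)/2) *
      ((5:ℝ≥0∞) ^ d * volume B) ^ ((1:ℝ)/2)) * (P ^ d) ^ ((1:ℝ)/2) := by
    calc L ≤ ∫⁻ x, I x ^ ((1:ℝ)/2) := setLIntegral_le_lintegral _ _
      _ = ∫⁻ x in ⋃ k : Fin d → ℤ, cube d j k, I x ^ ((1:ℝ)/2) := by
          rw [hcov, setLIntegral_univ]
      _ ≤ ∑' k : Fin d → ℤ, ∫⁻ x in cube d j k, I x ^ ((1:ℝ)/2) :=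
          lintegral_iUnion_le _ _
      _ ≤ ∑' k : Fin d → ℤ, (volume (A ∩ cubeS d j k) * volume (B ∩ cubeS d j k)) ^ ((1:ℝ)/2) *
            (P ^ d) ^ ((1:ℝ)/2) := ENNReal.tsum_le_tsum hcube_le
      _ = (∑' k : Fin d → ℤ, (volume (A ∩ cubeS d j k)) ^ ((1:ℝ)/2) *
            (volume (B ∩ cubeS d j k)) ^ ((1:ℝ)/2)) * (P ^ d) ^ ((1:ℝ)/2) := by
          simp_rw [ENNReal.mul_rpow_of_nonneg _ _ (by norm_num : (0:ℝ) ≤ 1/2)]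
          rw [ENNReal.tsum_mul_right]
      _ ≤ _ := mul_le_mul_left hsum _
  have h55 : (5:ℝ≥0∞) ^ d * 5 ^ d = 25 ^ d := by
    rw [← mul_pow]; norm_num
  have hb2 : L ^ (2:ℕ) ≤ (25:ℝ≥0∞) ^ d * (volume A * volume B * (2:ℝ≥0∞) ^ ((d : ℤ) * j)) := by
    calc L ^ (2:ℕ) ≤ ((((5:ℝ≥0∞) ^ d * volume A) ^ ((1:ℝ)/2) *
          ((5:ℝ≥0∞) ^ d * volume B) ^ ((1:ℝ)/2)) * (P ^ d) ^ ((1:ℝ)/2)) ^ (2:ℕ) := hsq _ _ hL2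
      _ = ((5:ℝ≥0∞) ^ d * volume A) * ((5:ℝ≥0∞) ^ d * volume B) * P ^ d := by
          rw [mul_pow, mul_pow, hhalf2, hhalf2, hhalf2]
      _ = ((5:ℝ≥0∞) ^ d * 5 ^ d) * (volume A * volume B * P ^ d) := by ring
      _ = (25:ℝ≥0∞) ^ d * (volume A * volume B * (2:ℝ≥0∞) ^ ((d : ℤ) * j)) := by
          rw [h55, hPd]
  rcases le_total ((2:ℝ≥0∞) ^ ((d : ℤ) * j)) (volume E) with hmin | hmin
  · rw [min_eq_left hmin]
    refine hb2.trans (le_of_eq ?_)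
    rw [hofReal]
    ring
  · rw [min_eq_right hmin]
    refine hb1.trans ?_
    calc volume A * volume B * volume E
        = 1 * (volume A * volume B * volume E) := (one_mul _).symm
      _ ≤ (25:ℝ≥0∞) ^ d * (volume A * volume B * volume E) := mul_le_mul_left hone _
      _ = ENNReal.ofReal ((25:ℝ) ^ d) * volume A * volume B * volume E := by
          rw [hofReal]; ring
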